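/- Let S be a generalized numerical semigroup in ℕ^d. The following are equivalent: (i) the Frobenius gap F_≺(S) is the same for every relaxed monomial order ≺ on ℕ^d (i.e. S is a Frobenius GNS); (ii) the gap set H(S) has a unique maximal element with respect to the natural partial order; (iii) the set PF(S) of pseudo-Frobenius gaps has a unique maximal element with respect to the natural partial order. -/

import Mathlib

open Finset

/-- A generalized numerical semigroup (GNS) in `ℕ^d`: contains `0`, is closed under
componentwise addition, and has finite complement. -/
def IsGNS {d : ℕ} (S : Set (Fin d → ℕ)) : Prop :=
  (0 : Fin d → ℕ) ∈ S ∧ (∀ a ∈ S, ∀ b ∈ S, a + b ∈ S) ∧ Sᶜ.Finite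

/-- A relaxed monomial order on `ℕ^d`: a (strict) total order `r` such that
`r v w → r v (w + u)` and `0` is below every nonzero element. -/
def IsRMO {d : ℕ} (r : (Fin d → ℕ) → (Fin d → ℕ) → Prop) : Prop :=
  IsStrictTotalOrder (Fin d → ℕ) r ∧
  (∀ v w u : Fin d → ℕ, r v w → r v (w + u)) ∧
  (∀ v : Fin d → ℕ, v ≠ 0 → r 0 v)

/-- `F` is the Frobenius gap of `S` with respect to the order `r`, i.e. the
`r`-maximum of the gap set `ℕ^d \ S`. -/
def IsFrobGapWrt {d : ℕ} (S : Set (Fin d → ℕ))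
    (r : (Fin d → ℕ) → (Fin d → ℕ) → Prop) (F : Fin d → ℕ) : Prop :=
  F ∉ S ∧ ∀ x, x ∉ S → x ≠ F → r x F

/-- `F` is a Frobenius allowable gap of `S`: it is the Frobenius gap with respect to
some relaxed monomial order. -/
def FrobAllowable {d : ℕ} (S : Set (Fin d → ℕ)) (F : Fin d → ℕ) : Prop :=
  ∃ r, IsRMO r ∧ IsFrobGapWrt S r F

/-- `F` is a maximal gap of `S` with respect to the natural (componentwise)
partial order on `ℕ^d`. -/
def MaxGap {d : ℕ} (S : Set (Fin d → ℕ)) (F : Fin d → ℕ) : Prop :=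
  F ∉ S ∧ ∀ x, x ∉ S → F ≤ x → x = F

/-- The set of Frobenius allowable gaps of `S`, i.e. the maximal elements of the gap
set under the natural partial order. -/
def FA {d : ℕ} (S : Set (Fin d → ℕ)) : Set (Fin d → ℕ) := {F | MaxGap S F}

/-- The set of pseudo-Frobenius gaps of `S`. -/
def PF {d : ℕ} (S : Set (Fin d → ℕ)) : Set (Fin d → ℕ) :=
  {P | P ∉ S ∧ ∀ s ∈ S, s ≠ 0 → P + s ∈ S}

/-- `S` is quasi-irreducible: for every gap `x`, either `2x` is Frobenius allowable or
`F - x ∈ S` for some Frobenius allowable gap `F`. -/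
def QuasiIrreducible {d : ℕ} (S : Set (Fin d → ℕ)) : Prop :=
  ∀ x, x ∉ S → (x + x ∈ FA S ∨ ∃ F ∈ FA S, ∃ s ∈ S, x + s = F)

/-- `S` is a Frobenius GNS with Frobenius gap `F`: the gap set has `F` as its unique
maximal element under the natural partial order. -/
def IsFrobeniusGNS {d : ℕ} (S : Set (Fin d → ℕ)) (F : Fin d → ℕ) : Prop :=
  IsGNS S ∧ MaxGap S F ∧ ∀ x, MaxGap S x → x = F

/-- `‖F‖ = ∏ i (F^(i) + 1)`, the number of lattice points in the box `[0, F]`. -/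
def normF {d : ℕ} (F : Fin d → ℕ) : ℕ := ∏ i, (F i + 1)

/-- `N(F)`: the number of Frobenius GNS in `ℕ^d` with Frobenius gap `F`. -/
noncomputable def NF {d : ℕ} (F : Fin d → ℕ) : ℕ :=
  {S : Set (Fin d → ℕ) | IsFrobeniusGNS S F}.ncard

section Aux
variable {d : ℕ}

/-- The strict lexicographic relation on `Fin d → ℕ`. -/
def plex (v w : Fin d → ℕ) : Prop := Pi.Lex (· < ·) (fun {_} => (· < ·)) v w

lemma plex_irrefl (a : Fin d → ℕ) : ¬ plex a a := fun ⟨k, _, hk⟩ => lt_irrefl _ hk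

lemma plex_trans {a b c : Fin d → ℕ} (h1 : plex a b) (h2 : plex b c) : plex a c := by
  obtain ⟨N₁, lt_N₁, a_lt_b⟩ := h1
  obtain ⟨N₂, lt_N₂, b_lt_c⟩ := h2
  rcases lt_trichotomy N₁ N₂ with (H | rfl | H)
  exacts [⟨N₁, fun j hj => (lt_N₁ _ hj).trans (lt_N₂ _ <| hj.trans H), lt_N₂ _ H ▸ a_lt_b⟩,
    ⟨N₁, fun j hj => (lt_N₁ _ hj).trans (lt_N₂ _ hj), a_lt_b.trans b_lt_c⟩,
    ⟨N₂, fun j hj => (lt_N₁ _ (hj.trans H)).trans (lt_N₂ _ hj), (lt_N₁ _ H).symm ▸ b_lt_c⟩]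

lemma plex_trichotomous (a b : Fin d → ℕ) : plex a b ∨ a = b ∨ plex b a :=
  haveI := Pi.trichotomous_lex (fun (x1 x2 : Fin d) => x1 < x2) (fun {_} (x1 x2 : ℕ) => x1 < x2)
    (IsWellFounded.wf (r := ((· < ·) : Fin d → Fin d → Prop)))
  trichotomous_of (Pi.Lex (fun (x1 x2 : Fin d) => x1 < x2) (fun {_} (x1 x2 : ℕ) => x1 < x2)) a b

lemma plex_of_lt {a b : Fin d → ℕ} (hle : a ≤ b) (hne : a ≠ b) : plex a b :=
  Pi.lex_lt_of_lt (IsWellFounded.wf (r := ((· < ·) : Fin d → Fin d → Prop)))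
    (lt_of_le_of_ne hle hne)

lemma pi_add_sub {v w : Fin d → ℕ} (hle : v ≤ w) : v + (w - v) = w := by
  funext i
  exact Nat.add_sub_cancel' (hle i)

/-- Any relaxed monomial order refines the componentwise strict order. -/
lemma rmo_of_lt {r : (Fin d → ℕ) → (Fin d → ℕ) → Prop} (h : IsRMO r)
    {v w : Fin d → ℕ} (hle : v ≤ w) (hne : v ≠ w) : r v w := by
  haveI := h.1
  rcases trichotomous_of r v w with h1 | h1 | h1
  · exact h1
  · exact absurd h1 hne
  · exfalso
    have h2 := h.2.1 w v (w - v) h1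
    rw [pi_add_sub hle] at h2
    exact irrefl_of r w h2

/-- The plain lexicographic order is a relaxed monomial order. -/
lemma rmoLex_isRMO : IsRMO (plex (d := d)) := by
  refine ⟨@IsStrictTotalOrder.mk _ _ ⟨fun a b h1 h2 => ((plex_trichotomous a b).resolve_left h1).resolve_right h2⟩
    (@IsStrictOrder.mk _ _ ⟨plex_irrefl⟩ ⟨fun _ _ _ => plex_trans⟩), ?_, ?_⟩
  · intro v w u h
    rcases eq_or_ne w (w + u) with he | hne
    · exact he ▸ h
    · exact plex_trans h (plex_of_lt le_self_add hne)
  · intro v hv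
    exact plex_of_lt (fun j => Nat.zero_le _) (fun h => hv h.symm)

/-- The coordinate-`i`-first lexicographic order. -/
def rmoAt (i : Fin d) : (Fin d → ℕ) → (Fin d → ℕ) → Prop :=
  fun v w => v i < w i ∨ (v i = w i ∧ plex v w)

lemma rmoAt_isRMO (i : Fin d) : IsRMO (rmoAt i) := by
  refine ⟨@IsStrictTotalOrder.mk _ _ ⟨?_⟩ (@IsStrictOrder.mk _ _ ⟨?_⟩ ⟨?_⟩), ?_, ?_⟩
  · intro a b hab hba
    refine ((?_ : rmoAt i a b ∨ a = b ∨ rmoAt i b a).resolve_left hab).resolve_right hba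
    rcases lt_trichotomy (a i) (b i) with h | h | h
    · exact Or.inl (Or.inl h)
    · rcases plex_trichotomous a b with h' | h' | h'
      · exact Or.inl (Or.inr ⟨h, h'⟩)
      · exact Or.inr (Or.inl h')
      · exact Or.inr (Or.inr (Or.inr ⟨h.symm, h'⟩))
    · exact Or.inr (Or.inr (Or.inl h))
  · rintro a (h | ⟨-, h⟩)
    · exact lt_irrefl _ h
    · exact plex_irrefl a h
  · rintro a b c (h1 | ⟨h1, h1'⟩) (h2 | ⟨h2, h2'⟩)
    · exact Or.inl (h1.trans h2)
    · exact Or.inl (h2 ▸ h1)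
    · exact Or.inl (h1 ▸ h2)
    · exact Or.inr ⟨h1.trans h2, plex_trans h1' h2'⟩
  · rintro v w u (h | ⟨h1, h2⟩)
    · exact Or.inl (lt_of_lt_of_le h ((le_self_add : w ≤ w + u) i))
    · rcases lt_or_eq_of_le ((le_self_add : w ≤ w + u) i) with h3 | h3
      · exact Or.inl (h1 ▸ h3)
      · refine Or.inr ⟨h1.trans h3, ?_⟩
        rcases eq_or_ne w (w + u) with he | hne
        · exact he ▸ h2
        · exact plex_trans h2 (plex_of_lt le_self_add hne)
  · intro v hv
    by_cases h0 : (0 : Fin d → ℕ) i < v i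
    · exact Or.inl h0
    · exact Or.inr ⟨le_antisymm (Nat.zero_le _) (not_lt.mp h0),
        plex_of_lt (fun j => Nat.zero_le _) (fun h => hv h.symm)⟩

/-- Every gap lies below some maximal gap. -/
lemma exists_maxGap {S : Set (Fin d → ℕ)} (hfin : Sᶜ.Finite)
    {x : Fin d → ℕ} (hx : x ∉ S) : ∃ F, MaxGap S F ∧ x ≤ F := by
  have hT : ({y | y ∉ S ∧ x ≤ y} : Set (Fin d → ℕ)).Finite :=
    hfin.subset (fun y hy => hy.1)
  have hne : ({y | y ∉ S ∧ x ≤ y} : Set (Fin d → ℕ)).Nonempty := ⟨x, hx, le_refl x⟩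
  obtain ⟨F, hF, hmax'⟩ := Set.exists_max_image _ (fun y => ∑ j, y j) hT hne
  have hmax : ∀ z ∈ ({y | y ∉ S ∧ x ≤ y} : Set (Fin d → ℕ)), ∑ j, F j ≤ ∑ j, z j →
      ∑ j, F j = ∑ j, z j := fun z hz h => le_antisymm h (hmax' z hz)
  refine ⟨F, ⟨hF.1, ?_⟩, hF.2⟩
  intro z hz hFz
  have hzT : z ∈ {y | y ∉ S ∧ x ≤ y} := ⟨hz, hF.2.trans hFz⟩
  have hsum : ∑ j, F j = ∑ j, z j :=
    hmax z hzT (Finset.sum_le_sum fun j _ => hFz j)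
  funext j
  by_contra hne'
  have hlt : F j < z j := lt_of_le_of_ne (hFz j) fun h => hne' h.symm
  have : ∑ j, F j < ∑ j, z j :=
    Finset.sum_lt_sum (fun k _ => hFz k) ⟨j, Finset.mem_univ j, hlt⟩
  omega

lemma maxGap_iff_pf {S : Set (Fin d → ℕ)} (hfin : Sᶜ.Finite) (F : Fin d → ℕ) :
    MaxGap S F ↔ (F ∈ PF S ∧ ∀ Q ∈ PF S, F ≤ Q → Q = F) := by
  constructor
  · intro hF
    refine ⟨⟨hF.1, ?_⟩, ?_⟩
    · intro s hs hs0
      by_contra hFs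
      have := hF.2 (F + s) hFs le_self_add
      exact hs0 (by simpa using congrArg (fun y => y - F) this)
    · intro Q hQ hFQ
      exact hF.2 Q hQ.1 hFQ
  · rintro ⟨hP, hmax⟩
    refine ⟨hP.1, ?_⟩
    intro z hz hPz
    obtain ⟨G, hG, hzG⟩ := exists_maxGap hfin hz
    have hGPF : G ∈ PF S := by
      refine ⟨hG.1, ?_⟩
      intro s hs hs0
      by_contra hGs
      have := hG.2 (G + s) hGs le_self_add
      exact hs0 (by simpa using congrArg (fun y => y - G) this)
    have hGP : G = F := hmax G hGPF (hPz.trans hzG)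
    exact le_antisymm (hGP ▸ hzG) hPz

end Aux

/-- For a GNS `S`, the following are equivalent: (i) the Frobenius gap is the same for
every relaxed monomial order; (ii) the gap set has a unique maximal element under the
natural partial order; (iii) `PF(S)` has a unique maximal element under the natural
partial order. -/
theorem frobeniusGNS_tfae {d : ℕ} (S : Set (Fin d → ℕ)) (hS : IsGNS S) :
    ((∃ F : Fin d → ℕ, ∀ r, IsRMO r → IsFrobGapWrt S r F) ↔ (∃! F, MaxGap S F)) ∧
    ((∃! F, MaxGap S F) ↔
      (∃! P, P ∈ PF S ∧ ∀ Q ∈ PF S, P ≤ Q → Q = P)) := by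
  have hfin := hS.2.2
  constructor
  · constructor
    · rintro ⟨F, hF⟩
      have hkey : ∀ x, x ∉ S → x ≠ F → x ≤ F := by
        intro x hx hxF
        by_contra hle
        obtain ⟨i, hi⟩ := not_forall.mp hle
        have hi' : F i < x i := by
          have h' : ¬ x i ≤ F i := hi
          omega
        have h2 := (hF (rmoAt i) (rmoAt_isRMO i)).2 x hx hxF
        rcases h2 with h | ⟨h, _⟩ <;> omega
      have hFS : F ∉ S := (hF _ rmoLex_isRMO).1
      have hFmax : MaxGap S F := by
        refine ⟨hFS, ?_⟩
        intro x hx hFx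
        by_contra hxF
        exact hxF (le_antisymm (hkey x hx hxF) hFx)
      refine ⟨F, hFmax, ?_⟩
      intro x hx
      by_contra hxF
      exact hxF (hx.2 F hFS (hkey x hx.1 hxF)).symm
    · rintro ⟨F, hF, huniq⟩
      refine ⟨F, fun r hr => ⟨hF.1, ?_⟩⟩
      intro x hx hxF
      obtain ⟨G, hG, hxG⟩ := exists_maxGap hfin hx
      rw [huniq G hG] at hxG
      exact rmo_of_lt hr hxG hxF
  · exact existsUnique_congr (fun F => maxGap_iff_pf hfin F)
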